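/- Shifting lemma (exact solver, vertical strips): Let S be a finite set of points in the Euclidean plane and ℓ a positive integer. For a shift j ∈ {0, 1, …, ℓ-1} and an integer k, let B_{j,k} = {p ∈ S : 2(ℓk + j) ≤ p₁ < 2(ℓ(k+1) + j)}. Then there exists a shift j ∈ {0, 1, …, ℓ-1} such that Σ_k γ_S(B_{j,k}) ≤ (1 + 1/ℓ) · γ_S(S), where the sum ranges over the (finitely many) integers k with B_{j,k} nonempty and γ_S(T) denotes the minimum cardinality of a subset of S that dominates T. -/
import Mathlib


/-- The Euclidean plane. -/
abbrev Plane : Type := EuclideanSpace ℝ (Fin 2)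

noncomputable instance : DecidableEq Plane := Classical.decEq _

attribute [local instance] Classical.propDecidable

/-- `D` dominates `T` if every point of `T` is within distance `1` of some point of `D`. -/
def Dominates (D T : Finset Plane) : Prop := ∀ p ∈ T, ∃ q ∈ D, dist p q ≤ 1

/-- `gamma S T` is the minimum cardinality of a subset of `S` that dominates `T`. -/
noncomputable def gamma (S T : Finset Plane) : ℕ :=
  sInf {n : ℕ | ∃ D ⊆ S, Dominates D T ∧ D.card = n}

/-- The `k`-th block of shift `j` of `S` (blocks of `ℓ` consecutive vertical strips of
width `2`): the points `p ∈ S` with `2(ℓk + j) ≤ p₁ < 2(ℓ(k+1) + j)`. -/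
noncomputable def block (S : Finset Plane) (ℓ j : ℕ) (k : ℤ) : Finset Plane :=
  S.filter fun p =>
    2 * ((ℓ : ℝ) * (k : ℝ) + (j : ℝ)) ≤ p 0 ∧ p 0 < 2 * ((ℓ : ℝ) * ((k : ℝ) + 1) + (j : ℝ))

lemma coord_dist_le (p q : Plane) : |p 0 - q 0| ≤ dist p q := by
  rw [EuclideanSpace.dist_eq p q, ← Real.dist_eq, ← Real.sqrt_sq dist_nonneg]
  exact Real.sqrt_le_sqrt (Finset.single_le_sum
    (f := fun i : Fin 2 => dist (p i) (q i) ^ 2) (fun i _ => sq_nonneg _) (Finset.mem_univ 0))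

lemma gamma_le {S T D : Finset Plane} (hD : D ⊆ S) (hdom : Dominates D T) :
    gamma S T ≤ D.card := Nat.sInf_le ⟨D, hD, hdom, rfl⟩

lemma gamma_spec {S T : Finset Plane} (hT : T ⊆ S) :
    ∃ D ⊆ S, Dominates D T ∧ D.card = gamma S T :=
  Nat.sInf_mem (s := {n : ℕ | ∃ D ⊆ S, Dominates D T ∧ D.card = n})
    ⟨T.card, T, hT, fun p hp => ⟨p, hp, by simp⟩, rfl⟩

/-- The index of the length-2 window `[2m-1, 2m+1)` containing `q 0`. -/
noncomputable def midx (q : Plane) : ℤ := ⌊(q 0 + 1) / 2⌋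

lemma midx_spec (q : Plane) : 2 * (midx q : ℝ) - 1 ≤ q 0 ∧ q 0 < 2 * (midx q : ℝ) + 1 := by
  have h1 := Int.floor_le ((q 0 + 1) / 2)
  have h2 := Int.lt_floor_add_one ((q 0 + 1) / 2)
  unfold midx
  constructor <;> [linarith; linarith]

/-- the extended strip predicate -/
def stripP (ℓ j : ℕ) (k : ℤ) (q : Plane) : Prop :=
  2 * ((ℓ : ℝ) * (k : ℝ) + (j : ℝ)) - 1 ≤ q 0 ∧
    q 0 < 2 * ((ℓ : ℝ) * ((k : ℝ) + 1) + (j : ℝ)) + 1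

lemma stripP_bounds {ℓ j : ℕ} {k : ℤ} {q : Plane} (h : stripP ℓ j k q) :
    midx q - j - ℓ ≤ (ℓ : ℤ) * k ∧ (ℓ : ℤ) * k ≤ midx q - j := by
  obtain ⟨h1, h2⟩ := h
  obtain ⟨hq1, hq2⟩ := midx_spec q
  have r1 : ((ℓ : ℤ) * k + j : ℤ) < midx q + 1 := by
    have : ((ℓ : ℝ) * k + j : ℝ) < (midx q : ℝ) + 1 := by linarith
    exact_mod_cast this
  have r2 : (midx q : ℤ) < (ℓ : ℤ) * k + ℓ + j + 1 := by
    have : (midx q : ℝ) < (ℓ : ℝ) * k + ℓ + j + 1 := by linarith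
    exact_mod_cast this
  constructor <;> linarith

lemma block_mem_iff {S : Finset Plane} {ℓ : ℕ} (hℓ : 0 < ℓ) {j : ℕ} {k : ℤ} {p : Plane} :
    p ∈ block S ℓ j k ↔ p ∈ S ∧ ⌊(p 0 - 2 * (j : ℝ)) / (2 * (ℓ : ℝ))⌋ = k := by
  have h2l : (0:ℝ) < 2 * (ℓ:ℝ) := by positivity
  rw [block, Finset.mem_filter, and_congr_right_iff]
  intro _
  rw [Int.floor_eq_iff, le_div_iff₀ h2l, div_lt_iff₀ h2l]
  push_cast
  constructor <;> rintro ⟨h1, h2⟩ <;> constructor <;> nlinarith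

/-- Shifting lemma (exact solver, vertical strips): there is a shift `j ∈ {0, …, ℓ-1}` such
that the sum, over the nonempty blocks of shift `j`, of the minimum sizes of dominating sets
is at most `(1 + 1/ℓ) · γ_S(S)`. -/
theorem shifting_lemma_exact (S : Finset Plane) (ℓ : ℕ) (hℓ : 0 < ℓ) :
    ∃ j < ℓ,
      (∑ᶠ k ∈ {k : ℤ | (block S ℓ j k).Nonempty}, (gamma S (block S ℓ j k) : ℝ)) ≤
        (1 + 1 / (ℓ : ℝ)) * (gamma S S : ℝ) := by
  classical
  have hl0 : (0:ℝ) < (ℓ:ℝ) := by exact_mod_cast hℓ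
  have hlz : ((ℓ:ℤ)) ≠ 0 := by exact_mod_cast hℓ.ne'
  have hlpos : (0:ℤ) < (ℓ:ℤ) := by exact_mod_cast hℓ
  obtain ⟨D, hDS, hDdom, hDcard⟩ := gamma_spec (subset_rfl : S ⊆ S)
  -- the finite index set of nonempty blocks
  set K : ℕ → Finset ℤ :=
    fun j => S.image (fun p => ⌊(p 0 - 2 * (j : ℝ)) / (2 * (ℓ : ℝ))⌋) with hK
  have hset : ∀ j : ℕ, {k : ℤ | (block S ℓ j k).Nonempty} = ↑(K j) := by
    intro j
    ext k
    simp only [Set.mem_setOf_eq, hK, Finset.coe_image, Set.mem_image, Finset.mem_coe]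
    constructor
    · rintro ⟨p, hp⟩
      exact ⟨p, ((block_mem_iff hℓ).mp hp).1, ((block_mem_iff hℓ).mp hp).2⟩
    · rintro ⟨p, hpS, hpk⟩
      exact ⟨p, (block_mem_iff hℓ).mpr ⟨hpS, hpk⟩⟩
  -- step A : gamma of a block is at most the number of optimal points in the extended strip
  have hA : ∀ (j : ℕ) (k : ℤ),
      gamma S (block S ℓ j k) ≤ (D.filter (fun q => stripP ℓ j k q)).card := by
    intro j k
    apply gamma_le ((Finset.filter_subset _ _).trans hDS)
    intro p hp
    rw [block, Finset.mem_filter] at hp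
    obtain ⟨hpS, hp1, hp2⟩ := hp
    obtain ⟨q, hqD, hq⟩ := hDdom p hpS
    have habs := abs_le.mp (le_trans (coord_dist_le p q) hq)
    refine ⟨q, Finset.mem_filter.2 ⟨hqD, ?_, ?_⟩, hq⟩
    · have := habs.2; linarith
    · have := habs.1; linarith
  -- step C : each optimal point is in at most `1 + [bad]` strips
  have hC : ∀ (j : ℕ) (q : Plane), (j : ℤ) < (ℓ : ℤ) →
      ((K j).filter (fun k => stripP ℓ j k q)).card ≤
        1 + (if midx q % (ℓ : ℤ) = (j : ℤ) then 1 else 0) := by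
    intro j q hj
    set a : ℤ := midx q - j with ha
    have hdm := Int.mul_ediv_add_emod a ℓ
    have hr0 : 0 ≤ a % (ℓ:ℤ) := Int.emod_nonneg a hlz
    have hrl : a % (ℓ:ℤ) < ℓ := Int.emod_lt_of_pos a hlpos
    have hup : ∀ k ∈ (K j).filter (fun k => stripP ℓ j k q), k ≤ a / ℓ := by
      intro k hk
      obtain ⟨h1, h2⟩ := stripP_bounds ((Finset.mem_filter.mp hk).2)
      have : (ℓ:ℤ) * k ≤ (ℓ:ℤ) * (a / ℓ) + a % ℓ := by rw [hdm]; linarith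
      have hkk : (ℓ:ℤ) * k < (ℓ:ℤ) * (a / ℓ + 1) := by linarith [mul_add (ℓ:ℤ) (a/ℓ) 1]
      have := lt_of_mul_lt_mul_left hkk (le_of_lt hlpos)
      linarith
    by_cases hd : a % (ℓ:ℤ) = 0
    · -- bad case: two strips possible, but the `if` is 1
      have hcond : midx q % (ℓ:ℤ) = (j:ℤ) := by
        have hma : midx q = (j:ℤ) + (ℓ:ℤ) * (a / ℓ) := by
          rw [hd] at hdm; omega
        rw [hma, Int.add_mul_emod_self_left]
        exact Int.emod_eq_of_lt (Int.ofNat_nonneg j) hj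
      rw [hcond, if_pos rfl]
      have hsub : (K j).filter (fun k => stripP ℓ j k q) ⊆ Finset.Icc (a / ℓ - 1) (a / ℓ) := by
        intro k hk
        rw [Finset.mem_Icc]
        refine ⟨?_, hup k hk⟩
        obtain ⟨h1, h2⟩ := stripP_bounds ((Finset.mem_filter.mp hk).2)
        have hle : (ℓ:ℤ) * (a / ℓ - 1) ≤ (ℓ:ℤ) * k := by
          have : (ℓ:ℤ) * (a/ℓ) = a := by omega
          have := mul_sub (ℓ:ℤ) (a/ℓ) 1
          linarith
        have := le_of_mul_le_mul_left hle hlpos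
        linarith
      calc ((K j).filter (fun k => stripP ℓ j k q)).card
          ≤ (Finset.Icc (a / ℓ - 1) (a / ℓ)).card := Finset.card_le_card hsub
        _ = 2 := by
            rw [Int.card_Icc, show a / (ℓ:ℤ) + 1 - (a / (ℓ:ℤ) - 1) = 2 by ring]
            rfl
    · -- good case: at most one strip
      rw [ha] at *
      have hr1 : 1 ≤ (midx q - j) % (ℓ:ℤ) := lt_of_le_of_ne hr0 (Ne.symm hd)
      have hsub : (K j).filter (fun k => stripP ℓ j k q) ⊆ {(midx q - j) / ℓ} := by
        intro k hk
        rw [Finset.mem_singleton]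
        refine le_antisymm (hup k hk) ?_
        by_contra hcon
        push_neg at hcon
        have hk1 : k + 1 ≤ (midx q - j) / ℓ := hcon
        obtain ⟨h1, h2⟩ := stripP_bounds ((Finset.mem_filter.mp hk).2)
        have hle : (ℓ:ℤ) * (k + 1) ≤ (ℓ:ℤ) * ((midx q - j) / ℓ) :=
          mul_le_mul_of_nonneg_left hk1 (le_of_lt hlpos)
        have hmul : (ℓ:ℤ) * ((midx q - j) / ℓ) = (midx q - j) - (midx q - j) % ℓ := by omega
        have := mul_add (ℓ:ℤ) k 1
        linarith
      calc ((K j).filter (fun k => stripP ℓ j k q)).card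
          ≤ ({(midx q - j) / ℓ} : Finset ℤ).card := Finset.card_le_card hsub
        _ = 1 := Finset.card_singleton _
        _ ≤ _ := by split <;> norm_num
  -- step D : per-shift bound
  have hD1 : ∀ j : ℕ, j < ℓ →
      (∑ k ∈ K j, gamma S (block S ℓ j k)) ≤
        D.card + (D.filter (fun q => midx q % (ℓ:ℤ) = (j:ℤ))).card := by
    intro j hj
    have hjz : (j:ℤ) < (ℓ:ℤ) := by exact_mod_cast hj
    calc (∑ k ∈ K j, gamma S (block S ℓ j k))
        ≤ ∑ k ∈ K j, (D.filter (fun q => stripP ℓ j k q)).card :=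
          Finset.sum_le_sum (fun k _ => hA j k)
      _ = ∑ k ∈ K j, ∑ q ∈ D, (if stripP ℓ j k q then 1 else 0) :=
          Finset.sum_congr rfl fun k _ => Finset.card_filter _ _
      _ = ∑ q ∈ D, ∑ k ∈ K j, (if stripP ℓ j k q then 1 else 0) := Finset.sum_comm
      _ = ∑ q ∈ D, ((K j).filter (fun k => stripP ℓ j k q)).card :=
          Finset.sum_congr rfl fun q _ => (Finset.card_filter _ _).symm
      _ ≤ ∑ q ∈ D, (1 + if midx q % (ℓ:ℤ) = (j:ℤ) then 1 else 0) :=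
          Finset.sum_le_sum (fun q _ => hC j q hjz)
      _ = D.card + (D.filter (fun q => midx q % (ℓ:ℤ) = (j:ℤ))).card := by
          rw [Finset.sum_add_distrib, Finset.sum_const, smul_eq_mul, mul_one]
          congr 1
          exact (Finset.card_filter _ _).symm
  -- step E : total badness over all shifts is at most |D|
  have hE : (∑ j ∈ Finset.range ℓ, (D.filter (fun q => midx q % (ℓ:ℤ) = (j:ℤ))).card)
      ≤ D.card := by
    calc (∑ j ∈ Finset.range ℓ, (D.filter (fun q => midx q % (ℓ:ℤ) = (j:ℤ))).card)
        = ∑ j ∈ Finset.range ℓ, ∑ q ∈ D, (if midx q % (ℓ:ℤ) = (j:ℤ) then 1 else 0) :=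
          Finset.sum_congr rfl fun j _ => Finset.card_filter _ _
      _ = ∑ q ∈ D, ∑ j ∈ Finset.range ℓ, (if midx q % (ℓ:ℤ) = (j:ℤ) then 1 else 0) :=
          Finset.sum_comm
      _ ≤ ∑ _q ∈ D, 1 := ?_
      _ = D.card := by simp
    apply Finset.sum_le_sum
    intro q _
    set r : ℤ := midx q % (ℓ:ℤ) with hr
    have hle : ∀ j ∈ Finset.range ℓ,
        (if r = (j:ℤ) then (1:ℕ) else 0) ≤ (if j = r.toNat then (1:ℕ) else 0) := by
      intro j _
      by_cases h : r = (j:ℤ)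
      · rw [if_pos h, if_pos (by omega)]
      · rw [if_neg h]
        exact Nat.zero_le _
    calc (∑ j ∈ Finset.range ℓ, (if r = (j:ℤ) then (1:ℕ) else 0))
        ≤ ∑ j ∈ Finset.range ℓ, (if j = r.toNat then (1:ℕ) else 0) := Finset.sum_le_sum hle
      _ ≤ 1 := by rw [Finset.sum_ite_eq' (Finset.range ℓ) r.toNat (fun _ => (1:ℕ))]; split <;> norm_num
  -- pigeonhole over shifts
  set F : ℕ → ℕ := fun j => ∑ k ∈ K j, gamma S (block S ℓ j k) with hF
  have hT : (∑ j ∈ Finset.range ℓ, F j) ≤ (ℓ + 1) * D.card := by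
    calc (∑ j ∈ Finset.range ℓ, F j)
        ≤ ∑ j ∈ Finset.range ℓ,
            (D.card + (D.filter (fun q => midx q % (ℓ:ℤ) = (j:ℤ))).card) :=
          Finset.sum_le_sum (fun j hj => hD1 j (Finset.mem_range.mp hj))
      _ = ℓ * D.card + ∑ j ∈ Finset.range ℓ,
            (D.filter (fun q => midx q % (ℓ:ℤ) = (j:ℤ))).card := by
          rw [Finset.sum_add_distrib, Finset.sum_const, Finset.card_range, smul_eq_mul]
      _ ≤ ℓ * D.card + D.card := by omega
      _ = (ℓ + 1) * D.card := by ring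
  have hpigeon : ∃ j ∈ Finset.range ℓ, ℓ * F j ≤ (ℓ + 1) * D.card := by
    by_contra h
    push_neg at h
    have h1 : (∑ _j ∈ Finset.range ℓ, (ℓ + 1) * D.card) < ∑ j ∈ Finset.range ℓ, ℓ * F j :=
      Finset.sum_lt_sum_of_nonempty ⟨0, Finset.mem_range.mpr hℓ⟩ h
    rw [Finset.sum_const, Finset.card_range, smul_eq_mul, ← Finset.mul_sum] at h1
    have h2 : ℓ * (∑ j ∈ Finset.range ℓ, F j) ≤ ℓ * ((ℓ + 1) * D.card) :=
      Nat.mul_le_mul_left _ hT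
    have := h1.trans_le h2
    omega
  obtain ⟨j, hjr, hjle⟩ := hpigeon
  refine ⟨j, Finset.mem_range.mp hjr, ?_⟩
  rw [hset j, finsum_mem_coe_finset]
  have hcast : (ℓ:ℝ) * (F j : ℝ) ≤ ((ℓ:ℝ) + 1) * (D.card : ℝ) := by exact_mod_cast hjle
  have hsumcast : (∑ k ∈ K j, (gamma S (block S ℓ j k) : ℝ)) = (F j : ℝ) := by
    rw [hF]; push_cast; ring
  rw [hsumcast, ← hDcard]
  have key : (1 + 1 / (ℓ:ℝ)) * (D.card : ℝ) = ((ℓ:ℝ) + 1) * (D.card : ℝ) / (ℓ:ℝ) := by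
    field_simp
  rw [key, le_div_iff₀ hl0]
  linarith
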